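/- With the coefficients a₀,...,a₁₆ of the Mossinghoff–Trudgian polynomial, define E_C(d₂, r, c) = a₀/r - a₁/(r+c) + a₁r/(r² + d₂²) - a₀(r+c)/((r+c)² + d₂²) + ((1-κ)/2)·Σ_{k=0}^{16} a_k. Then for all real c with 0 < c < 1/12.43436, one has E_C(2.318, 0.2473, c) < 0. -/

import Mathlib

lemma aux (K A x y : ℝ) (hx : 0 < x) (hy : 0 < y)
    (h : (K*x - A)*y - x^2 < 0) : K - A/x - x/y < 0 := by
  rw [show K - A/x - x/y = ((K*x - A)*y - x^2)/(x*y) by field_simp]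
  exact div_neg_of_neg_of_pos h (by positivity)

set_option maxHeartbeats 1000000



/-- `κ = 1/√5`. -/
noncomputable def κ : ℝ := 1 / Real.sqrt 5

/-- The coefficients of the Mossinghoff–Trudgian polynomial `p₁₆`. -/
noncomputable def a : ℕ → ℝ
  | 0 => 1
  | 1 => 1.74126664022806
  | 2 => 1.128282822804652
  | 3 => 0.5065272432186642
  | 4 => 0.1253566902628852
  | 5 => 2.372710620e-26
  | 6 => 2.818732841e-22
  | 7 => 0.01201214561729989
  | 8 => 0.006875849760911001
  | 9 => 2.064157910e-23
  | 10 => 6.601587090e-11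
  | 11 => 0.001608306592372963
  | 12 => 0.001017994683287104
  | 13 => 6.728831293e-11
  | 14 => 3.682448595e-11
  | 15 => 2.949853019e-6
  | 16 => 0.00003713656497
  | _ => 0

/-- `𝓔_C(d₂, r, c)`. -/
noncomputable def EC (d₂ r c : ℝ) : ℝ :=
  a 0 / r - a 1 / (r + c) + a 1 * r / (r ^ 2 + d₂ ^ 2) -
    a 0 * (r + c) / ((r + c) ^ 2 + d₂ ^ 2) +
    (1 - κ) / 2 * ∑ k ∈ Finset.range 17, a k

/-- For `0 < c < 1/12.43436`, `𝓔_C(2.318, 0.2473, c) < 0`. -/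
theorem EC_neg (c : ℝ) (hc : 0 < c) (hc' : c < 1 / 12.43436) :
    EC 2.318 0.2473 c < 0 := by
  have hs0 : (0:ℝ) < Real.sqrt 5 := Real.sqrt_pos.2 (by norm_num)
  have hs5 : Real.sqrt 5 < 2.2360679775 := by
    rw [show (2.2360679775:ℝ) = Real.sqrt (2.2360679775^2) from
      (Real.sqrt_sq (by norm_num)).symm]
    exact Real.sqrt_lt_sqrt (by norm_num) (by norm_num)
  have hκ : (1:ℝ)/2.2360679775 < κ := by
    unfold κ
    rw [div_lt_div_iff₀ (by norm_num) hs0]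
    linarith
  have hκ1 : κ < 1 := by
    unfold κ
    rw [div_lt_one hs0]
    nlinarith [Real.sq_sqrt (show (0:ℝ) ≤ 5 by norm_num)]
  set x : ℝ := 0.2473 + c with hxdef
  have hx1 : (0.2473:ℝ) < x := by simp only [hxdef]; linarith
  have hx2 : x < 0.2473 + 1/12.43436 := by simp only [hxdef]; linarith
  have hx0 : (0:ℝ) < x := lt_trans (by norm_num) hx1
  have hden : (0:ℝ) < x^2 + 2.318^2 := by positivity
  have hS : ∑ k ∈ Finset.range 17, a k = 4.5229877797562500277803025385903062 := by
    simp [Finset.sum_range_succ, a]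
    norm_num
  have hEC : EC 2.318 0.2473 c =
      (1/0.2473 + 1.74126664022806*0.2473/(0.2473^2+2.318^2))
        - 1.74126664022806/x - x/(x^2+2.318^2)
        + (1-κ)/2 * 4.5229877797562500277803025385903062 := by
    rw [EC, hS]
    norm_num [a, hxdef]
    ring
  have hκS : (1-κ)/2 * 4.5229877797562500277803025385903062 <
      (1-1/2.2360679775)/2 * 4.5229877797562500277803025385903062 := by
    nlinarith
  set K : ℝ := (1/0.2473 + 1.74126664022806*0.2473/(0.2473^2+2.318^2))
        + (1-(1:ℝ)/2.2360679775)/2 * 4.5229877797562500277803025385903062 with hK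
  have hKval : K = (64584888448147162190806267007623516532350087488950373157 :ℝ) / 12020187011664789952470000000000000000000000000000000000 := by
    rw [hK]; norm_num
  have hnum : (K*x - 1.74126664022806)*(x^2+2.318^2) - x^2 < 0 := by
    rw [hKval]
    nlinarith [mul_pos (show (0:ℝ) < 0.2473 + 1/12.43436 - x by linarith)
        (show (0:ℝ) < x - 0.2473 by linarith),
      sq_nonneg (x - 0.2473), sq_nonneg (x - 0.2473 - 1/12.43436),
      mul_pos hx0 hden]
  have h2 : K - 1.74126664022806/x - x/(x^2+2.318^2) < 0 :=
    aux K 1.74126664022806 x (x^2+2.318^2) hx0 hden hnum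
  rw [hEC]
  rw [hK] at h2
  linarith
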